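/- Let $P$ be a probability density on a $\sigma$-finite measured space $(E,\mathcal{A},\nu)$, let $p,q$ be probability densities on a $\sigma$-finite measured space $(T,\mathcal{T},m)$, and let $(P_t)_{t\in T}$ be a measurable family of probability densities on $E$. Then $h^2\big(\int_T P_t p(t)\,dm(t),\ \int_T P_t q(t)\,dm(t)\big) \le 2 h^2(p,q)$. -/

import Mathlib

open MeasureTheory

/-- Squared Hellinger distance between two densities on a measured space. -/
noncomputable def hell2 {E : Type*} [MeasurableSpace E] (ν : Measure E) (f g : E → ℝ) : ℝ :=
  (1 / 2) * ∫ x, (Real.sqrt (f x) - Real.sqrt (g x)) ^ 2 ∂ν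

/-- Cauchy–Schwarz for integrals of square roots. -/
lemma integral_sqrt_mul_sqrt_le {α : Type*} [MeasurableSpace α] (μ : Measure α)
    {u v : α → ℝ} (hu0 : ∀ t, 0 ≤ u t) (hv0 : ∀ t, 0 ≤ v t)
    (hu : Integrable u μ) (hv : Integrable v μ) :
    ∫ t, Real.sqrt (u t) * Real.sqrt (v t) ∂μ ≤
      Real.sqrt (∫ t, u t ∂μ) * Real.sqrt (∫ t, v t ∂μ) := by
  have h2 : (2 : ℝ).HolderConjugate 2 :=
    (Real.holderConjugate_iff_eq_conjExponent one_lt_two).2 (by norm_num)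
  have hsu : AEStronglyMeasurable (fun t => Real.sqrt (u t)) μ :=
    Real.continuous_sqrt.comp_aestronglyMeasurable hu.aestronglyMeasurable
  have hsv : AEStronglyMeasurable (fun t => Real.sqrt (v t)) μ :=
    Real.continuous_sqrt.comp_aestronglyMeasurable hv.aestronglyMeasurable
  have hmu : MemLp (fun t => Real.sqrt (u t)) (ENNReal.ofReal 2) μ := by
    rw [show ENNReal.ofReal 2 = 2 by norm_num]
    exact (memLp_two_iff_integrable_sq hsu).2
      (hu.congr (Filter.Eventually.of_forall fun t => (Real.sq_sqrt (hu0 t)).symm))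
  have hmv : MemLp (fun t => Real.sqrt (v t)) (ENNReal.ofReal 2) μ := by
    rw [show ENNReal.ofReal 2 = 2 by norm_num]
    exact (memLp_two_iff_integrable_sq hsv).2
      (hv.congr (Filter.Eventually.of_forall fun t => (Real.sq_sqrt (hv0 t)).symm))
  have := integral_mul_le_Lp_mul_Lq_of_nonneg h2
    (Filter.Eventually.of_forall fun t => Real.sqrt_nonneg (u t))
    (Filter.Eventually.of_forall fun t => Real.sqrt_nonneg (v t)) hmu hmv
  have hru : (fun t => Real.sqrt (u t) ^ (2 : ℝ)) = u := by
    funext t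
    rw [show ((2 : ℝ) : ℝ) = ((2 : ℕ) : ℝ) by norm_num, Real.rpow_natCast,
      Real.sq_sqrt (hu0 t)]
  have hrv : (fun t => Real.sqrt (v t) ^ (2 : ℝ)) = v := by
    funext t
    rw [show ((2 : ℝ) : ℝ) = ((2 : ℕ) : ℝ) by norm_num, Real.rpow_natCast,
      Real.sq_sqrt (hv0 t)]
  rw [hru, hrv] at this
  calc ∫ t, Real.sqrt (u t) * Real.sqrt (v t) ∂μ
      ≤ (∫ t, u t ∂μ) ^ (1 / (2 : ℝ)) * (∫ t, v t ∂μ) ^ (1 / (2 : ℝ)) := this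
    _ = Real.sqrt (∫ t, u t ∂μ) * Real.sqrt (∫ t, v t ∂μ) := by
        rw [Real.sqrt_eq_rpow, Real.sqrt_eq_rpow]

/-- Reverse triangle inequality in `L²`: the square of the difference of the `L¹` norms'
square roots is at most the integral of the square of the difference of square roots. -/
lemma sq_sqrt_integral_sub_le {α : Type*} [MeasurableSpace α] (μ : Measure α)
    {u v : α → ℝ} (hu0 : ∀ t, 0 ≤ u t) (hv0 : ∀ t, 0 ≤ v t)
    (hu : Integrable u μ) (hv : Integrable v μ) :
    (Real.sqrt (∫ t, u t ∂μ) - Real.sqrt (∫ t, v t ∂μ)) ^ 2 ≤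
      ∫ t, (Real.sqrt (u t) - Real.sqrt (v t)) ^ 2 ∂μ := by
  set A := ∫ t, u t ∂μ with hA
  set B := ∫ t, v t ∂μ with hB
  have hA0 : 0 ≤ A := integral_nonneg hu0
  have hB0 : 0 ≤ B := integral_nonneg hv0
  have hsm : AEStronglyMeasurable (fun t => Real.sqrt (u t) * Real.sqrt (v t)) μ :=
    (Real.continuous_sqrt.comp_aestronglyMeasurable hu.aestronglyMeasurable).mul
      (Real.continuous_sqrt.comp_aestronglyMeasurable hv.aestronglyMeasurable)
  have huv : Integrable (fun t => u t + v t) μ := hu.add hv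
  have hI : Integrable (fun t => Real.sqrt (u t) * Real.sqrt (v t)) μ := by
    refine Integrable.mono' (huv.const_mul (1 / 2)) hsm
      (Filter.Eventually.of_forall fun t => ?_)
    have h1 := Real.sq_sqrt (hu0 t)
    have h2 := Real.sq_sqrt (hv0 t)
    have h3 := sq_nonneg (Real.sqrt (u t) - Real.sqrt (v t))
    have h4 := Real.sqrt_nonneg (u t)
    have h5 := Real.sqrt_nonneg (v t)
    rw [Real.norm_of_nonneg (mul_nonneg h4 h5)]
    nlinarith
  have hCS : ∫ t, Real.sqrt (u t) * Real.sqrt (v t) ∂μ ≤ Real.sqrt A * Real.sqrt B :=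
    integral_sqrt_mul_sqrt_le μ hu0 hv0 hu hv
  have hRHS : ∫ t, (Real.sqrt (u t) - Real.sqrt (v t)) ^ 2 ∂μ =
      A + B - 2 * ∫ t, Real.sqrt (u t) * Real.sqrt (v t) ∂μ := by
    have heq : (fun t => (Real.sqrt (u t) - Real.sqrt (v t)) ^ 2) =
        fun t => u t + v t - 2 * (Real.sqrt (u t) * Real.sqrt (v t)) := by
      funext t
      have h1 := Real.sq_sqrt (hu0 t)
      have h2 := Real.sq_sqrt (hv0 t)
      ring_nf
      nlinarith
    rw [heq, integral_sub huv (hI.const_mul 2), integral_add hu hv,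
      integral_const_mul, hA, hB]
  rw [hRHS, sub_sq, Real.sq_sqrt hA0, Real.sq_sqrt hB0]
  nlinarith

/-- Joint integrability of `(t, x) ↦ P t x * c t` on the product space. -/
lemma mix_integrable {T E : Type*} [MeasurableSpace T] [MeasurableSpace E]
    (m : Measure T) (ν : Measure E) [SigmaFinite m] [SigmaFinite ν]
    (P : T → E → ℝ) (c : T → ℝ) (hc0 : ∀ t, 0 ≤ c t) (hcm : Measurable c)
    (hcint : Integrable c m)
    (hP0 : ∀ t x, 0 ≤ P t x) (hPm : Measurable (Function.uncurry P))
    (hPtint : ∀ t, Integrable (P t) ν) (hP1 : ∀ t, ∫ x, P t x ∂ν = 1) :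
    Integrable (fun z : T × E => P z.1 z.2 * c z.1) (m.prod ν) := by
  have hmeas : Measurable fun z : T × E => P z.1 z.2 * c z.1 :=
    hPm.mul (hcm.comp measurable_fst)
  refine ⟨hmeas.aestronglyMeasurable, ?_⟩
  rw [hasFiniteIntegral_iff_ofReal (f := fun z : T × E => P z.1 z.2 * c z.1)
    (Filter.Eventually.of_forall fun z => mul_nonneg (hP0 z.1 z.2) (hc0 z.1))]
  rw [lintegral_prod _ hmeas.ennreal_ofReal.aemeasurable]
  have hinner : ∀ t, ∫⁻ x, ENNReal.ofReal (P t x * c t) ∂ν = ENNReal.ofReal (c t) := by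
    intro t
    have hPt : Measurable fun x => P t x := hPm.comp measurable_prodMk_left
    calc ∫⁻ x, ENNReal.ofReal (P t x * c t) ∂ν
        = ∫⁻ x, ENNReal.ofReal (P t x) * ENNReal.ofReal (c t) ∂ν := by
          simp_rw [← ENNReal.ofReal_mul (hP0 t _)]
      _ = (∫⁻ x, ENNReal.ofReal (P t x) ∂ν) * ENNReal.ofReal (c t) :=
          lintegral_mul_const _ hPt.ennreal_ofReal
      _ = ENNReal.ofReal (c t) := by
          rw [← ofReal_integral_eq_lintegral_ofReal (hPtint t)
            (Filter.Eventually.of_forall (hP0 t)), hP1 t, ENNReal.ofReal_one, one_mul]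
  calc ∫⁻ t, ∫⁻ x, ENNReal.ofReal (P t x * c t) ∂ν ∂m
      = ∫⁻ t, ENNReal.ofReal (c t) ∂m := by
        exact lintegral_congr fun t => hinner t
    _ = ENNReal.ofReal (∫ t, c t ∂m) :=
        (ofReal_integral_eq_lintegral_ofReal hcint
          (Filter.Eventually.of_forall hc0)).symm
    _ < ⊤ := ENNReal.ofReal_lt_top

/-- Changing only the mixing weights: `h²(∫ P_t p(t) dm, ∫ P_t q(t) dm) ≤ 2 h²(p,q)`. -/
theorem hellinger_mixture_weights {T E : Type*} [MeasurableSpace T] [MeasurableSpace E]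
    (m : Measure T) (ν : Measure E) [SigmaFinite m] [SigmaFinite ν]
    (p q : T → ℝ) (P : T → E → ℝ)
    (hp0 : ∀ t, 0 ≤ p t) (hq0 : ∀ t, 0 ≤ q t)
    (hpm : Measurable p) (hqm : Measurable q)
    (hp1 : ∫ t, p t ∂m = 1) (hq1 : ∫ t, q t ∂m = 1)
    (hP0 : ∀ t x, 0 ≤ P t x)
    (hPm : Measurable (Function.uncurry P))
    (hP1 : ∀ t, ∫ x, P t x ∂ν = 1) :
    hell2 ν (fun x => ∫ t, P t x * p t ∂m) (fun x => ∫ t, P t x * q t ∂m) ≤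
      2 * hell2 m p q := by
  -- basic integrability facts
  have hpint : Integrable p m := by
    by_contra h
    rw [integral_undef h] at hp1; norm_num at hp1
  have hqint : Integrable q m := by
    by_contra h
    rw [integral_undef h] at hq1; norm_num at hq1
  have hPtint : ∀ t, Integrable (P t) ν := by
    intro t
    by_contra h
    have := hP1 t
    rw [integral_undef h] at this
    norm_num at this
  -- the weight-difference density
  set c : T → ℝ := fun t => (Real.sqrt (p t) - Real.sqrt (q t)) ^ 2 with hc
  have hc0 : ∀ t, 0 ≤ c t := fun t => sq_nonneg _
  have hcm : Measurable c := ((hpm.sqrt.sub hqm.sqrt).pow_const 2)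
  have hcint : Integrable c m := by
    refine Integrable.mono' ((hpint.add hqint).const_mul 2) hcm.aestronglyMeasurable
      (Filter.Eventually.of_forall fun t => ?_)
    have h1 := Real.sq_sqrt (hp0 t)
    have h2 := Real.sq_sqrt (hq0 t)
    have h3 := Real.sqrt_nonneg (p t)
    have h4 := Real.sqrt_nonneg (q t)
    rw [Real.norm_of_nonneg (hc0 t)]
    simp only [hc, Pi.add_apply]
    nlinarith
  have hcI : ∫ t, c t ∂m = 2 * hell2 m p q := by
    simp only [hell2, hc]; ring
  -- joint integrabilities
  have hWp : Integrable (fun z : T × E => P z.1 z.2 * p z.1) (m.prod ν) :=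
    mix_integrable m ν P p hp0 hpm hpint hP0 hPm hPtint hP1
  have hWq : Integrable (fun z : T × E => P z.1 z.2 * q z.1) (m.prod ν) :=
    mix_integrable m ν P q hq0 hqm hqint hP0 hPm hPtint hP1
  have hWc : Integrable (fun z : T × E => P z.1 z.2 * c z.1) (m.prod ν) :=
    mix_integrable m ν P c hc0 hcm hcint hP0 hPm hPtint hP1
  -- the dominating function F
  set F : E → ℝ := fun x => ∫ t, P t x * c t ∂m with hF
  have hFint : Integrable F ν := hWc.integral_prod_right
  have hFI : ∫ x, F x ∂ν = ∫ t, c t ∂m := by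
    have hswap := integral_integral_swap (f := fun t x => P t x * c t) hWc
    rw [hF, ← hswap]
    congr 1
    funext t
    rw [integral_mul_const, hP1 t, one_mul]
  -- pointwise (a.e.) bound
  have hae : ∀ᵐ x ∂ν,
      (Real.sqrt (∫ t, P t x * p t ∂m) - Real.sqrt (∫ t, P t x * q t ∂m)) ^ 2 ≤ F x := by
    filter_upwards [hWp.prod_left_ae, hWq.prod_left_ae] with x hu hv
    have key := sq_sqrt_integral_sub_le m
      (u := fun t => P t x * p t) (v := fun t => P t x * q t)
      (fun t => mul_nonneg (hP0 t x) (hp0 t)) (fun t => mul_nonneg (hP0 t x) (hq0 t)) hu hv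
    refine key.trans_eq ?_
    rw [hF]
    congr 1
    funext t
    rw [Real.sqrt_mul (hP0 t x), Real.sqrt_mul (hP0 t x), ← mul_sub, mul_pow,
      Real.sq_sqrt (hP0 t x)]
  -- conclude
  have hmono : ∫ x, (Real.sqrt (∫ t, P t x * p t ∂m) -
      Real.sqrt (∫ t, P t x * q t ∂m)) ^ 2 ∂ν ≤ ∫ x, F x ∂ν :=
    integral_mono_of_nonneg (Filter.Eventually.of_forall fun x => sq_nonneg _) hFint hae
  have hpos : 0 ≤ hell2 m p q := by
    have : 0 ≤ ∫ t, (Real.sqrt (p t) - Real.sqrt (q t)) ^ 2 ∂m :=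
      integral_nonneg fun t => sq_nonneg _
    simp only [hell2]; linarith
  calc hell2 ν (fun x => ∫ t, P t x * p t ∂m) (fun x => ∫ t, P t x * q t ∂m)
      ≤ (1 / 2) * ∫ x, F x ∂ν := by
        simp only [hell2]
        linarith
    _ = (1 / 2) * (2 * hell2 m p q) := by rw [hFI, hcI]
    _ ≤ 2 * hell2 m p q := by linarith
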